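/- For any c > 0, the infimum of ∫_{B(0,1)} |Df(x)|^d dx over all C¹ maps f : B(0,1) → ℝ^d with ∫_{B(0,1)} det Df = c equals d^{d/2} c (it is at least d^{d/2} c, and approached by conformal Möbius maps concentrating at the boundary). -/

import Mathlib

open MeasureTheory Metric Filter Topology
open scoped ENNReal

noncomputable section

/-- `ℝ^d` as Euclidean space. -/
abbrev E (d : ℕ) := EuclideanSpace ℝ (Fin d)

/-- The first standard basis vector `e₁`. -/
def e1 (d : ℕ) [NeZero d] : E d := EuclideanSpace.single 0 1

/-- `aₙ = (1 + 1/n) e₁`. -/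
def a (d : ℕ) [NeZero d] (n : ℕ) : E d := (1 + 1/(n:ℝ)) • e1 d

/-- `fₙ(x) = (2/n) (x - aₙ)/|x - aₙ|²`. -/
def f (d : ℕ) [NeZero d] (n : ℕ) (x : E d) : E d :=
  (2/(n:ℝ)) • (‖x - a d n‖^2)⁻¹ • (x - a d n)

/-- The Frobenius (Hilbert–Schmidt) norm of a linear map on `ℝ^d`. -/
def frob (d : ℕ) (A : E d →L[ℝ] E d) : ℝ :=
  Real.sqrt (∑ i, ‖A (EuclideanSpace.single i 1)‖^2)

/-! ### Auxiliary lemmas -/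

open Matrix in
theorem aux_detsq_le (d : ℕ) (hd : d ≠ 0) (M : Matrix (Fin d) (Fin d) ℝ) :
    (M.det)^2 ≤ ((Matrix.trace (Mᵀ * M)) / d) ^ d := by
  classical
  have hN : (Mᵀ * M).IsHermitian := by simpa using Matrix.isHermitian_conjTranspose_mul_self M
  set ev := hN.eigenvalues with hev
  have hnn : ∀ i, 0 ≤ ev i := fun i => Matrix.PosSemidef.eigenvalues_nonneg (by
    simpa using Matrix.posSemidef_conjTranspose_mul_self M) i
  have hdet : (Mᵀ * M).det = ∏ i, ev i := by
    rw [hN.det_eq_prod_eigenvalues]; norm_num; rfl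
  have htr : Matrix.trace (Mᵀ * M) = ∑ i, ev i := by
    rw [hN.trace_eq_sum_eigenvalues]
    simp [ev]
  have amgm := Real.geom_mean_le_arith_mean_weighted Finset.univ
    (fun _ => (d:ℝ)⁻¹) ev (fun i _ => by positivity)
    (by simp [Finset.card_univ]; field_simp) (fun i _ => hnn i)
  have hsum : ∑ i, (d:ℝ)⁻¹ * ev i = (∑ i, ev i) / d := by
    rw [← Finset.mul_sum]; ring
  have key : (∏ i, ev i) ≤ ((∑ i, ev i) / d) ^ d := by
    have h1 : (∏ i, ev i ^ ((d:ℝ)⁻¹)) ^ d = ∏ i, ev i := by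
      rw [← Finset.prod_pow]
      refine Finset.prod_congr rfl fun i _ => ?_
      rw [← Real.rpow_natCast (ev i ^ ((d:ℝ)⁻¹)) d, ← Real.rpow_mul (hnn i)]
      rw [inv_mul_cancel₀ (by exact_mod_cast hd), Real.rpow_one]
    calc (∏ i, ev i) = (∏ i, ev i ^ ((d:ℝ)⁻¹)) ^ d := h1.symm
      _ ≤ ((∑ i, ev i) / d) ^ d := by
          apply pow_le_pow_left₀ (Finset.prod_nonneg fun i _ => Real.rpow_nonneg (hnn i) _)
          rw [← hsum]; exact amgm
  have hMM : (M.det)^2 = (Mᵀ * M).det := by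
    rw [Matrix.det_mul, Matrix.det_transpose]; ring
  rw [hMM, hdet, htr]
  exact key

theorem aux_frob_nonneg (d : ℕ) (A : E d →L[ℝ] E d) : 0 ≤ frob d A := Real.sqrt_nonneg _

theorem aux_norm_sq_euclid (d : ℕ) (v : E d) : ‖v‖^2 = ∑ i, (v i)^2 := by
  rw [EuclideanSpace.norm_eq, Real.sq_sqrt (by positivity)]
  simp [Real.norm_eq_abs, sq_abs]

open Matrix in
/-- the pointwise Hadamard/AM-GM inequality `d^{d/2} det A ≤ |A|^d`. -/
theorem aux_amgm_det (d : ℕ) (hd : d ≠ 0) (A : E d →L[ℝ] E d) :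
    (d:ℝ)^((d:ℝ)/2) * LinearMap.det (A.toLinearMap) ≤ (frob d A)^d := by
  classical
  set b := (EuclideanSpace.basisFun (Fin d) ℝ).toBasis with hb
  set M := LinearMap.toMatrix b b A.toLinearMap with hM
  have hdet : LinearMap.det A.toLinearMap = M.det := (LinearMap.det_toMatrix b _).symm
  have hMij : ∀ i j, M i j = A (EuclideanSpace.single j 1) i := by
    intro i j
    rw [hM, LinearMap.toMatrix_apply]
    simp [b, EuclideanSpace.basisFun_apply]
  have hfrob : (frob d A)^2 = Matrix.trace (Mᵀ * M) := by
    rw [frob, Real.sq_sqrt (by positivity)]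
    rw [Matrix.trace]
    refine Finset.sum_congr rfl fun j _ => ?_
    rw [aux_norm_sq_euclid]
    simp [Matrix.mul_apply, hMij, pow_two, Matrix.diag]
  have hdpos : (0:ℝ) < d := by exact_mod_cast Nat.pos_of_ne_zero hd
  have key := aux_detsq_le d hd M
  rw [← hfrob] at key
  have hf : 0 ≤ frob d A := aux_frob_nonneg d A
  rcases le_or_gt (M.det) 0 with h0 | h0
  · calc (d:ℝ)^((d:ℝ)/2) * LinearMap.det A.toLinearMap ≤ 0 := by
          rw [hdet]
          exact mul_nonpos_of_nonneg_of_nonpos (Real.rpow_nonneg hdpos.le _) h0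
      _ ≤ (frob d A)^d := pow_nonneg hf d
  · have hL : 0 ≤ (d:ℝ)^((d:ℝ)/2) * M.det :=
      mul_nonneg (Real.rpow_nonneg hdpos.le _) h0.le
    rw [hdet]
    have hsq : ((d:ℝ)^((d:ℝ)/2) * M.det)^2 ≤ ((frob d A)^d)^2 := by
      have h1 : ((d:ℝ)^((d:ℝ)/2))^2 = (d:ℝ)^d := by
        rw [← Real.rpow_natCast ((d:ℝ)^((d:ℝ)/2)) 2, ← Real.rpow_mul hdpos.le,
          ← Real.rpow_natCast (d:ℝ) d]
        norm_num
      rw [mul_pow, h1]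
      calc (d:ℝ)^d * (M.det)^2 ≤ (d:ℝ)^d * ((frob d A)^2 / d)^d :=
            mul_le_mul_of_nonneg_left key (by positivity)
        _ = ((frob d A)^d)^2 := by
            rw [← mul_pow, mul_div_cancel₀ _ (ne_of_gt hdpos), ← pow_mul, ← pow_mul,
              Nat.mul_comm]
    have := Real.sqrt_le_sqrt hsq
    rwa [Real.sqrt_sq hL, Real.sqrt_sq (pow_nonneg hf d)] at this

open Matrix in
theorem aux_det_aux (d : ℕ) (s : ℝ) (u w : E d) (T : E d →L[ℝ] E d)
    (hT : ∀ v, T v = s • (v + (inner ℝ u v : ℝ) • w)) :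
    LinearMap.det (T.toLinearMap) = s^d * (1 + (inner ℝ u w : ℝ)) := by
  classical
  set b := (EuclideanSpace.basisFun (Fin d) ℝ).toBasis with hb
  rw [← LinearMap.det_toMatrix b]
  have hmat : LinearMap.toMatrix b b T.toLinearMap
      = s • (1 + Matrix.replicateCol (Fin 1) (fun i => w i) * Matrix.replicateRow (Fin 1) (fun j => u j)) := by
    ext i j
    rw [LinearMap.toMatrix_apply]
    simp only [b, OrthonormalBasis.coe_toBasis, EuclideanSpace.basisFun_apply,
      OrthonormalBasis.coe_toBasis_repr_apply, EuclideanSpace.basisFun_repr,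
      ContinuousLinearMap.coe_coe]
    rw [hT]
    simp only [PiLp.smul_apply, PiLp.add_apply, smul_eq_mul, Matrix.smul_apply,
      Matrix.add_apply, Matrix.one_apply, Matrix.mul_apply, Finset.univ_unique,
      Finset.sum_singleton, Matrix.replicateCol_apply, Matrix.replicateRow_apply]
    have hi : (inner ℝ u (EuclideanSpace.single j (1:ℝ)) : ℝ) = u j := by
      rw [EuclideanSpace.inner_single_right]; simp
    rw [hi, EuclideanSpace.single_apply]
    rcases eq_or_ne i j with h | h <;> simp [h, eq_comm, mul_comm]
  erw [hmat, Matrix.det_smul, Matrix.det_one_add_replicateCol_mul_replicateRow (ι := Fin 1) (u := fun i => w i) (v := fun j => u j), Fintype.card_fin]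
  have : (fun j => u j) ⬝ᵥ (fun i => w i) = (inner ℝ u w : ℝ) := by
    rw [PiLp.inner_apply]; simp [dotProduct, mul_comm]
  rw [this]

theorem aux_norm_reflect (d : ℕ) (y v : E d) (hy : y ≠ 0) :
    ‖v - (2 * ((‖y‖^2)⁻¹ * (inner ℝ y v : ℝ))) • y‖ = ‖v‖ := by
  have hy0 : 0 < ‖y‖ := norm_pos_iff.mpr hy
  have hq : ‖y‖^2 ≠ 0 := by positivity
  have h2 : ‖v - (2 * ((‖y‖^2)⁻¹ * (inner ℝ y v : ℝ))) • y‖^2 = ‖v‖^2 := by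
    rw [@norm_sub_sq_real, real_inner_smul_right, norm_smul, real_inner_comm v y,
      mul_pow, Real.norm_eq_abs, sq_abs]
    field_simp
    ring
  calc ‖v - (2 * ((‖y‖^2)⁻¹ * (inner ℝ y v : ℝ))) • y‖
      = √(‖v - (2 * ((‖y‖^2)⁻¹ * (inner ℝ y v : ℝ))) • y‖^2) := by
        rw [Real.sqrt_sq (norm_nonneg _)]
    _ = ‖v‖ := by rw [h2, Real.sqrt_sq (norm_nonneg _)]

/-! ### The conformal competitor -/

section constr
variable (d : ℕ) [NeZero d]

def Rrefl : E d →L[ℝ] E d :=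
  ContinuousLinearMap.id ℝ (E d) - (2:ℝ) • ((innerSL ℝ (e1 d)).smulRight (e1 d))

def Bmap (y : E d) : E d →L[ℝ] E d :=
  (‖y‖^2)⁻¹ • ContinuousLinearMap.id ℝ (E d)
    + ((-((‖y‖^2)^2)⁻¹ : ℝ) • ((2:ℝ) • (innerSL ℝ y))).smulRight y

theorem norm_e1 : ‖e1 d‖ = 1 := by
  rw [e1, EuclideanSpace.norm_single, norm_one]

theorem e1_ne : e1 d ≠ 0 := by
  intro h
  have := norm_e1 d
  rw [h] at this; simp at this

theorem Rrefl_apply (v : E d) :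
    Rrefl d v = v - (2 * (inner ℝ (e1 d) v : ℝ)) • e1 d := by
  simp [Rrefl, sub_eq_add_neg, smul_smul]

theorem norm_Rrefl (v : E d) : ‖Rrefl d v‖ = ‖v‖ := by
  have := aux_norm_reflect d (e1 d) v (e1_ne d)
  rw [norm_e1 d] at this
  simpa [Rrefl_apply] using this

theorem det_Rrefl : LinearMap.det (Rrefl d).toLinearMap = -1 := by
  have := aux_det_aux d 1 ((-2 : ℝ) • e1 d) (e1 d) (Rrefl d) (fun v => by
    rw [Rrefl_apply, real_inner_smul_left]
    match_scalars <;> ring)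
  rw [this, real_inner_smul_left, real_inner_self_eq_norm_sq, norm_e1]
  norm_num

omit [NeZero d] in
theorem Bmap_apply (y v : E d) :
    Bmap d y v = (‖y‖^2)⁻¹ • v + (-((‖y‖^2)^2)⁻¹ * (2 * (inner ℝ y v : ℝ))) • y := by
  simp [Bmap, smul_smul, mul_assoc]

omit [NeZero d] in
theorem Bmap_eq (y : E d) (hy : y ≠ 0) (v : E d) :
    Bmap d y v = (‖y‖^2)⁻¹ • (v - (2 * ((‖y‖^2)⁻¹ * (inner ℝ y v : ℝ))) • y) := by
  have hy0 : 0 < ‖y‖ := norm_pos_iff.mpr hy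
  have hq : (‖y‖:ℝ)^2 ≠ 0 := by positivity
  rw [Bmap_apply, smul_sub, smul_smul, sub_eq_add_neg, ← neg_smul]
  congr 1
  field_simp

omit [NeZero d] in
theorem norm_Bmap (y : E d) (hy : y ≠ 0) (v : E d) :
    ‖Bmap d y v‖ = (‖y‖^2)⁻¹ * ‖v‖ := by
  rw [Bmap_eq d y hy v, norm_smul, aux_norm_reflect d y v hy, Real.norm_eq_abs,
    abs_of_nonneg (by positivity)]

omit [NeZero d] in
theorem det_Bmap (y : E d) (hy : y ≠ 0) :
    LinearMap.det (Bmap d y).toLinearMap = -((‖y‖^2)⁻¹)^d := by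
  have hy0 : 0 < ‖y‖ := norm_pos_iff.mpr hy
  have hq : (‖y‖:ℝ)^2 ≠ 0 := by positivity
  have := aux_det_aux d ((‖y‖^2)⁻¹) ((-2 * (‖y‖^2)⁻¹ : ℝ) • y) y (Bmap d y) (fun v => by
    rw [Bmap_apply, real_inner_smul_left]
    match_scalars
    all_goals field_simp
    all_goals first | (left; ring) | simp | ring)
  rw [this, real_inner_smul_left, real_inner_self_eq_norm_sq]
  field_simp
  ring

omit [NeZero d] in
theorem hasfd (p x : E d) (hx : x ≠ p) :
    HasFDerivAt (fun x => (‖x - p‖^2)⁻¹ • (x - p)) (Bmap d (x - p)) x := by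
  have hne : x - p ≠ 0 := sub_ne_zero.mpr hx
  have hn0 : 0 < ‖x - p‖ := norm_pos_iff.mpr hne
  have hq0 : ‖x - p‖^2 ≠ 0 := by positivity
  have hu : HasFDerivAt (fun x : E d => x - p) (ContinuousLinearMap.id ℝ (E d)) x :=
    (hasFDerivAt_id x).sub_const p
  have hq : HasFDerivAt (fun x : E d => ‖x - p‖^2)
      (2 • (innerSL ℝ (x - p)).comp (ContinuousLinearMap.id ℝ (E d))) x := hu.norm_sq
  have hinv := (hasDerivAt_inv hq0).comp_hasFDerivAt x hq
  have hfin := hinv.smul hu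
  refine HasFDerivAt.congr_fderiv hfin ?_
  ext v
  simp [Bmap]

/-- the center point `p = 2e₁`. -/
def pc : E d := (2:ℝ) • e1 d

theorem norm_pc : ‖pc d‖ = 2 := by
  rw [pc, norm_smul, norm_e1]
  norm_num

theorem pc_far {x : E d} (hx : x ∈ closedBall (0:E d) 1) : x ≠ pc d := by
  intro h
  rw [mem_closedBall, dist_zero_right, h, norm_pc] at hx
  norm_num at hx

theorem pc_far' {x : E d} (hx : x ∈ closedBall (0:E d) 1) : 1 ≤ ‖x - pc d‖ := by
  have h1 : ‖x‖ ≤ 1 := by rwa [mem_closedBall, dist_zero_right] at hx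
  have := norm_sub_norm_le (pc d) x
  rw [norm_pc] at this
  rw [norm_sub_rev]
  linarith

/-- the competitor map (before scaling). -/
def gmap (lam : ℝ) : E d → E d :=
  fun x => lam • Rrefl d ((‖x - pc d‖^2)⁻¹ • (x - pc d))

/-- its derivative. -/
def Tmap (lam : ℝ) (x : E d) : E d →L[ℝ] E d :=
  lam • ((Rrefl d).comp (Bmap d (x - pc d)))

theorem gmap_hasfd (lam : ℝ) {x : E d} (hx : x ≠ pc d) :
    HasFDerivAt (gmap d lam) (Tmap d lam x) x :=
  (((Rrefl d).hasFDerivAt.comp x (hasfd d (pc d) x hx)).const_smul lam)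

theorem det_Tmap (lam : ℝ) {x : E d} (hx : x ≠ pc d) :
    LinearMap.det (Tmap d lam x).toLinearMap = (lam * (‖x - pc d‖^2)⁻¹)^d := by
  have hne : x - pc d ≠ 0 := sub_ne_zero.mpr hx
  rw [Tmap]
  rw [ContinuousLinearMap.coe_smul, LinearMap.det_smul, ContinuousLinearMap.toLinearMap_comp,
    LinearMap.det_comp, det_Rrefl, det_Bmap d _ hne, finrank_euclideanSpace_fin, mul_pow]
  ring

theorem frob_Tmap (lam : ℝ) (hlam : 0 ≤ lam) {x : E d} (hx : x ≠ pc d) :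
    frob d (Tmap d lam x) = Real.sqrt d * (lam * (‖x - pc d‖^2)⁻¹) := by
  have hne : x - pc d ≠ 0 := sub_ne_zero.mpr hx
  have hn0 : 0 < ‖x - pc d‖ := norm_pos_iff.mpr hne
  have h1 : ∀ i : Fin d, ‖Tmap d lam x (EuclideanSpace.single i 1)‖^2
      = (lam * (‖x - pc d‖^2)⁻¹)^2 := by
    intro i
    rw [Tmap]
    simp only [ContinuousLinearMap.smul_apply, ContinuousLinearMap.comp_apply]
    rw [norm_smul, norm_Rrefl, norm_Bmap d _ hne, Real.norm_eq_abs, abs_of_nonneg hlam]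
    rw [EuclideanSpace.norm_single, norm_one, mul_one]
  rw [frob]
  rw [Finset.sum_congr rfl (fun i _ => h1 i), Finset.sum_const, Finset.card_univ,
    Fintype.card_fin, nsmul_eq_mul]
  rw [Real.sqrt_mul (by positivity), Real.sqrt_sq (by positivity)]

end constr

theorem aux_sqrt_pow (d : ℕ) : (Real.sqrt d)^d = (d:ℝ)^((d:ℝ)/2) := by
  rw [Real.sqrt_eq_rpow, ← Real.rpow_natCast ((d:ℝ)^((1:ℝ)/2)) d,
    ← Real.rpow_mul (Nat.cast_nonneg d)]
  ring_nf

theorem stmt_17 (d : ℕ) [NeZero d] (hd : 2 ≤ d) (c : ℝ) (hc : 0 < c) :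
    IsGLB
      {y : ℝ | ∃ g : E d → E d,
        ContDiffOn ℝ 1 g (ball (0 : E d) 1) ∧
        IntegrableOn (fun x => LinearMap.det (fderiv ℝ g x).toLinearMap) (ball (0 : E d) 1) ∧
        IntegrableOn (fun x => (frob d (fderiv ℝ g x)) ^ d) (ball (0 : E d) 1) ∧
        (∫ x in ball (0 : E d) 1, LinearMap.det (fderiv ℝ g x).toLinearMap) = c ∧
        y = ∫ x in ball (0 : E d) 1, (frob d (fderiv ℝ g x)) ^ d}
      ((d : ℝ) ^ ((d : ℝ)/2) * c) := by
  have hd0 : d ≠ 0 := NeZero.ne d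
  have hdpos : (0:ℝ) < d := by exact_mod_cast Nat.pos_of_ne_zero hd0
  -- the density F and its integral
  set F : E d → ℝ := fun x => ((‖x - pc d‖^2)⁻¹)^d with hF
  have hcont : ContinuousOn F (closedBall (0:E d) 1) := by
    apply ContinuousOn.pow
    apply ContinuousOn.inv₀
    · exact (((continuous_id.sub continuous_const).norm).pow 2).continuousOn
    · intro x hx
      have h1 : (1:ℝ) ≤ ‖x - pc d‖ := pc_far' d hx
      positivity
  have hintF : IntegrableOn F (ball (0:E d) 1) volume :=
    (hcont.integrableOn_compact (isCompact_closedBall 0 1)).mono_set ball_subset_closedBall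
  set I₀ : ℝ := ∫ x in ball (0:E d) 1, F x with hI₀
  have hvol : (0:ℝ) < (volume (ball (0:E d) 1)).toReal :=
    ENNReal.toReal_pos (measure_ball_pos volume (0:E d) one_pos).ne' measure_ball_lt_top.ne
  have hFlb : ∀ x ∈ ball (0:E d) 1, ((9:ℝ)⁻¹)^d ≤ F x := by
    intro x hx
    have h1 : ‖x‖ < 1 := by rwa [mem_ball, dist_zero_right] at hx
    have h2 : ‖x - pc d‖ ≤ 3 := by
      have := norm_sub_le x (pc d)
      rw [norm_pc] at this
      linarith
    have h3 : (1:ℝ) ≤ ‖x - pc d‖ := pc_far' d (ball_subset_closedBall hx)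
    have h4 : ‖x - pc d‖^2 ≤ 9 := by nlinarith
    have h5 : (0:ℝ) < ‖x - pc d‖^2 := by positivity
    apply pow_le_pow_left₀ (by norm_num)
    exact (inv_anti₀ h5 h4 : ((9:ℝ))⁻¹ ≤ _)
  have hI₀pos : 0 < I₀ := by
    have hconst : IntegrableOn (fun _ : E d => ((9:ℝ)⁻¹)^d) (ball (0:E d) 1) volume :=
      integrableOn_const measure_ball_lt_top.ne
    calc (0:ℝ) < ((9:ℝ)⁻¹)^d * (volume (ball (0:E d) 1)).toReal := by positivity
      _ = ∫ _ in ball (0:E d) 1, ((9:ℝ)⁻¹)^d := by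
          rw [setIntegral_const, smul_eq_mul, mul_comm]; rfl
      _ ≤ I₀ := setIntegral_mono_on hconst hintF measurableSet_ball hFlb
  -- the scaling factor
  set lam : ℝ := (c / I₀) ^ ((d:ℝ)⁻¹) with hlam
  have hlampos : 0 < lam := Real.rpow_pos_of_pos (div_pos hc hI₀pos) _
  have hlamd : lam ^ d = c / I₀ := by
    rw [hlam, ← Real.rpow_natCast ((c / I₀) ^ ((d:ℝ)⁻¹)) d,
      ← Real.rpow_mul (div_pos hc hI₀pos).le,
      inv_mul_cancel₀ (by exact_mod_cast hd0), Real.rpow_one]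
  -- the competitor's fderiv on the ball
  have hfd : ∀ x ∈ ball (0:E d) 1, fderiv ℝ (gmap d lam) x = Tmap d lam x := fun x hx =>
    (gmap_hasfd d lam (pc_far d (ball_subset_closedBall hx))).fderiv
  have hdetEq : Set.EqOn (fun x => LinearMap.det (fderiv ℝ (gmap d lam) x).toLinearMap)
      (fun x => lam^d * F x) (ball (0:E d) 1) := by
    intro x hx
    simp only
    rw [hfd x hx, det_Tmap d lam (pc_far d (ball_subset_closedBall hx)), mul_pow]
  have hfrobEq : Set.EqOn (fun x => (frob d (fderiv ℝ (gmap d lam) x))^d)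
      (fun x => (Real.sqrt d)^d * (lam^d * F x)) (ball (0:E d) 1) := by
    intro x hx
    simp only
    rw [hfd x hx, frob_Tmap d lam hlampos.le (pc_far d (ball_subset_closedBall hx)),
      mul_pow, mul_pow]
  have hintF1 : IntegrableOn (fun x => lam^d * F x) (ball (0:E d) 1) volume :=
    hintF.const_mul _
  have hintF2 : IntegrableOn (fun x => (Real.sqrt d)^d * (lam^d * F x))
      (ball (0:E d) 1) volume := hintF1.const_mul _
  have hint1 : IntegrableOn (fun x => LinearMap.det (fderiv ℝ (gmap d lam) x).toLinearMap)
      (ball (0:E d) 1) volume :=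
    IntegrableOn.congr_fun hintF1 hdetEq.symm measurableSet_ball
  have hint2 : IntegrableOn (fun x => (frob d (fderiv ℝ (gmap d lam) x))^d)
      (ball (0:E d) 1) volume :=
    IntegrableOn.congr_fun hintF2 hfrobEq.symm measurableSet_ball
  have hintdet : (∫ x in ball (0:E d) 1, LinearMap.det (fderiv ℝ (gmap d lam) x).toLinearMap)
      = c := by
    rw [setIntegral_congr_fun measurableSet_ball hdetEq, integral_const_mul, ← hI₀, hlamd,
      div_mul_cancel₀ c hI₀pos.ne']
  have hintfrob : (∫ x in ball (0:E d) 1, (frob d (fderiv ℝ (gmap d lam) x))^d)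
      = (d:ℝ)^((d:ℝ)/2) * c := by
    rw [setIntegral_congr_fun measurableSet_ball hfrobEq, integral_const_mul,
      integral_const_mul, ← hI₀, hlamd, div_mul_cancel₀ c hI₀pos.ne', aux_sqrt_pow]
  have hmem : ((d:ℝ)^((d:ℝ)/2) * c) ∈
      {y : ℝ | ∃ g : E d → E d,
        ContDiffOn ℝ 1 g (ball (0 : E d) 1) ∧
        IntegrableOn (fun x => LinearMap.det (fderiv ℝ g x).toLinearMap) (ball (0 : E d) 1) ∧
        IntegrableOn (fun x => (frob d (fderiv ℝ g x)) ^ d) (ball (0 : E d) 1) ∧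
        (∫ x in ball (0 : E d) 1, LinearMap.det (fderiv ℝ g x).toLinearMap) = c ∧
        y = ∫ x in ball (0 : E d) 1, (frob d (fderiv ℝ g x)) ^ d} := by
    refine ⟨gmap d lam, ?_, hint1, hint2, hintdet, hintfrob.symm⟩
    -- smoothness
    have h1 : ContDiffOn ℝ 1 (fun x : E d => (‖x - pc d‖^2)⁻¹ • (x - pc d))
        (ball (0:E d) 1) := by
      apply ContDiffOn.smul (f := fun x : E d => (‖x - pc d‖^2)⁻¹) (g := fun x => x - pc d)
      · apply ContDiffOn.inv
        · exact ((contDiff_id.sub contDiff_const).norm_sq ℝ).contDiffOn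
        · intro x hx
          have := pc_far' d (ball_subset_closedBall hx)
          positivity
      · exact (contDiff_id.sub contDiff_const).contDiffOn
    exact (((Rrefl d).contDiff.comp_contDiffOn h1).const_smul lam : _)
  constructor
  · rintro y ⟨g, hg1, hgi1, hgi2, hgdet, rfl⟩
    calc (d:ℝ)^((d:ℝ)/2) * c
        = ∫ x in ball (0:E d) 1,
            (d:ℝ)^((d:ℝ)/2) * LinearMap.det (fderiv ℝ g x).toLinearMap := by
          rw [integral_const_mul, hgdet]
      _ ≤ ∫ x in ball (0:E d) 1, (frob d (fderiv ℝ g x))^d :=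
          setIntegral_mono_on (hgi1.const_mul _) hgi2 measurableSet_ball
            (fun x _ => aux_amgm_det d hd0 _)
  · intro b hb
    exact hb hmem
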